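/- Let G be a finite simple graph on n vertices with minimum degree at least 1, such that no two vertices of degree 1 are adjacent. Then G has at least ⌈2n/3⌉ edges. -/

import Mathlib

theorem stmt_0 {V : Type*} [Fintype V] [DecidableEq V]
    (G : SimpleGraph V) [DecidableRel G.Adj]
    (hmin : ∀ v : V, 1 ≤ G.degree v)
    (hdeg1 : ∀ u v : V, G.degree u = 1 → G.degree v = 1 → ¬ G.Adj u v) :
    (2 * Fintype.card V + 2) / 3 ≤ G.edgeFinset.card := by
  classical
  set A : Finset V := Finset.univ.filter (fun v => G.degree v = 1) with hA
  have hE := G.sum_degrees_eq_twice_card_edges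
  -- 2n ≤ sum of degrees + |A|
  have h1 : 2 * Fintype.card V ≤ (∑ v, G.degree v) + A.card := by
    have hcard : A.card = ∑ v : V, (if G.degree v = 1 then 1 else 0) := by
      rw [hA, Finset.card_filter]
    rw [hcard, ← Finset.sum_add_distrib]
    calc 2 * Fintype.card V = ∑ _v : V, 2 := by
          simp [Finset.sum_const, mul_comm]
      _ ≤ ∑ v : V, (G.degree v + if G.degree v = 1 then 1 else 0) := by
          apply Finset.sum_le_sum
          intro v _
          have := hmin v
          split <;> omega
  -- |A| ≤ number of edges
  obtain ⟨f, hf⟩ : ∃ f : V → V, ∀ v, G.Adj v (f v) := by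
    refine ⟨fun v => ((G.degree_pos_iff_exists_adj v).mp (hmin v)).choose, fun v =>
      ((G.degree_pos_iff_exists_adj v).mp (hmin v)).choose_spec⟩
  have h2 : A.card ≤ G.edgeFinset.card := by
    apply Finset.card_le_card_of_injOn (fun v => s(v, f v))
    · intro v _
      simp only [Finset.mem_coe, SimpleGraph.mem_edgeFinset, SimpleGraph.mem_edgeSet]
      exact hf v
    · intro u hu v hv huv
      simp only [hA, Finset.mem_coe, Finset.mem_filter] at hu hv
      rw [Sym2.eq_iff] at huv
      rcases huv with ⟨h, _⟩ | ⟨h1', h2'⟩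
      · exact h
      · exact absurd (h1' ▸ hf v) (fun h => hdeg1 v u hv.2 hu.2 h)
  omega
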